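/- arXiv:1411.6272 — 2 statements merged into one kernel-verified Lean document; each statement's English description precedes it below -/
import Mathlib

section
/- There exists a numerical constant c > 0 such that for every positive integer L and every real t with 1/L ≤ |t| ≤ 1/2, the function U(t) = ∑_{p=-N}^{N} min(1, 1/p⁴) · min(4, 2/|p - Lt|) (with the convention min(1,1/0⁴)=1 at p=0, and L = 2N+1) satisfies U(t) ≤ c/(L|t|), where we assume Lt ∈ {-N,...,N} is a nonzero integer. -/
private lemma sum_g_le (N : ℕ) :
    ∑ p ∈ Finset.Icc (-(N : ℤ)) (N : ℤ), (if p = 0 then (0:ℝ) else 1 / (p:ℝ)^2)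
      ≤ 4 - 4 / (N + 1) := by
  induction N with
  | zero => simp
  | succ n ih =>
    have hcast : ((n + 1 : ℕ) : ℤ) = (n : ℤ) + 1 := by push_cast; ring
    have hins : Finset.Icc (-((n:ℤ)+1)) ((n:ℤ)+1)
        = insert (-((n:ℤ)+1)) (insert ((n:ℤ)+1) (Finset.Icc (-(n:ℤ)) (n:ℤ))) := by
      ext x; simp only [Finset.mem_Icc, Finset.mem_insert]; omega
    rw [hcast, hins, Finset.sum_insert (by simp only [Finset.mem_insert, Finset.mem_Icc]; omega),
      Finset.sum_insert (by simp only [Finset.mem_Icc]; omega)]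
    have h1 : (-((n:ℤ)+1) : ℤ) ≠ 0 := by omega
    have h2 : ((n:ℤ)+1 : ℤ) ≠ 0 := by omega
    rw [if_neg h1, if_neg h2]
    have hx : (0:ℝ) < (n:ℝ) + 1 := by positivity
    have hv : ((-((n:ℤ)+1) : ℤ) : ℝ)^2 = ((n:ℝ)+1)^2 := by push_cast; ring
    have hv2 : (((n:ℤ)+1 : ℤ) : ℝ)^2 = ((n:ℝ)+1)^2 := by push_cast; ring
    rw [hv, hv2]
    have key : 2 / ((n:ℝ)+1)^2 ≤ 4 / ((n:ℝ)+1) - 4 / ((n:ℝ)+1+1) := by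
      rw [div_sub_div _ _ (ne_of_gt hx) (by positivity),
        div_le_div_iff₀ (by positivity) (by positivity)]
      nlinarith
    have hNc : ((n + 1 : ℕ) : ℝ) = (n:ℝ) + 1 := by push_cast; ring
    rw [hNc]
    have hh : 1 / ((n:ℝ)+1)^2 + 1 / ((n:ℝ)+1)^2 = 2 / ((n:ℝ)+1)^2 := by ring
    linarith

private lemma sum_g'_le (N : ℕ) :
    ∑ p ∈ Finset.Icc (-(N : ℤ)) (N : ℤ), (if p = 0 then (1:ℝ) else 1 / (p:ℝ)^2) ≤ 5 := by
  have h1 := sum_g_le N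
  have hsplit : ∀ p ∈ Finset.Icc (-(N : ℤ)) (N : ℤ),
      (if p = 0 then (1:ℝ) else 1 / (p:ℝ)^2)
        = (if p = 0 then (0:ℝ) else 1 / (p:ℝ)^2) + (if p = 0 then (1:ℝ) else 0) := by
    intro p _; split <;> simp
  rw [Finset.sum_congr rfl hsplit, Finset.sum_add_distrib]
  have h2 : ∑ p ∈ Finset.Icc (-(N : ℤ)) (N : ℤ), (if p = 0 then (1:ℝ) else 0) = 1 := by
    rw [Finset.sum_ite_eq' (Finset.Icc (-(N : ℤ)) (N : ℤ)) 0 (fun _ => (1:ℝ))]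
    simp
  have h3 : (0:ℝ) ≤ 4 / ((N:ℝ) + 1) := by positivity
  linarith

private lemma pointwise (j p : ℤ) (hj : j ≠ 0) :
    (if p = 0 then (1 : ℝ) else min 1 (1 / (p : ℝ) ^ 4)) *
        (if p = j then (4 : ℝ) else min 4 (2 / |(p : ℝ) - (j : ℝ)|))
      ≤ 4 / |(j:ℝ)| * (if p = 0 then (1:ℝ) else 1 / (p:ℝ)^2)
        + 16 / (j:ℝ)^2 * (if p = 0 then (0:ℝ) else 1 / (p:ℝ)^2) := by
  have hj1 : (1:ℝ) ≤ |(j:ℝ)| := by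
    rw [← Int.cast_abs]; exact_mod_cast Int.one_le_abs hj
  have hjpos : (0:ℝ) < |(j:ℝ)| := lt_of_lt_of_le one_pos hj1
  have htri : |(j:ℝ)| - |(p:ℝ)| ≤ |(p:ℝ) - (j:ℝ)| := by
    rw [abs_sub_comm]; exact abs_sub_abs_le_abs_sub _ _
  have hfnn : (0:ℝ) ≤ (if p = 0 then (1 : ℝ) else min 1 (1 / (p : ℝ) ^ 4)) := by
    split
    · norm_num
    · exact le_min zero_le_one (by positivity)
  have hsnn : (0:ℝ) ≤ (if p = j then (4 : ℝ) else min 4 (2 / |(p : ℝ) - (j : ℝ)|)) := by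
    split
    · norm_num
    · exact le_min (by norm_num) (by positivity)
  by_cases hc : |(j:ℝ)| ≤ 2 * |(p:ℝ) - (j:ℝ)|
  · -- far case: second factor ≤ 4/|j|
    have hpj : p ≠ j := by
      intro h; subst h
      simp only [sub_self, abs_zero, mul_zero] at hc
      linarith
    have hpjR : (p:ℝ) ≠ (j:ℝ) := by exact_mod_cast hpj
    have hd : (0:ℝ) < |(p:ℝ) - (j:ℝ)| := abs_pos.mpr (sub_ne_zero.mpr hpjR)
    have hsec : (if p = j then (4 : ℝ) else min 4 (2 / |(p : ℝ) - (j : ℝ)|)) ≤ 4 / |(j:ℝ)| := by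
      rw [if_neg hpj]
      refine le_trans (min_le_right _ _) ?_
      rw [div_le_div_iff₀ hd hjpos]
      linarith
    have hfst : (if p = 0 then (1 : ℝ) else min 1 (1 / (p : ℝ) ^ 4))
        ≤ (if p = 0 then (1:ℝ) else 1 / (p:ℝ)^2) := by
      split
      · exact le_rfl
      · rename_i hp0
        have hpne : (p:ℝ) ≠ 0 := by exact_mod_cast hp0
        have hp1 : (1:ℝ) ≤ (p:ℝ)^2 := by
          have : (1:ℤ) ≤ p^2 := by nlinarith [Int.one_le_abs hp0, sq_abs p]
          exact_mod_cast this
        have hp2 : (0:ℝ) < (p:ℝ)^2 := lt_of_lt_of_le one_pos hp1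
        have hp4 : (0:ℝ) < (p:ℝ)^4 := by nlinarith
        refine le_trans (min_le_right _ _) ?_
        rw [div_le_div_iff₀ hp4 hp2]
        nlinarith [mul_nonneg (sq_nonneg (p:ℝ)) (sub_nonneg.mpr hp1)]
    have hterm2 : (0:ℝ) ≤ 16 / (j:ℝ)^2 * (if p = 0 then (0:ℝ) else 1 / (p:ℝ)^2) := by
      split
      · simp
      · positivity
    have hbnn : (0:ℝ) ≤ (if p = 0 then (1:ℝ) else 1 / (p:ℝ)^2) := by
      split
      · norm_num
      · positivity
    calc (if p = 0 then (1 : ℝ) else min 1 (1 / (p : ℝ) ^ 4)) *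
          (if p = j then (4 : ℝ) else min 4 (2 / |(p : ℝ) - (j : ℝ)|))
        ≤ (if p = 0 then (1:ℝ) else 1 / (p:ℝ)^2) * (4 / |(j:ℝ)|) :=
          mul_le_mul hfst hsec hsnn hbnn
      _ = 4 / |(j:ℝ)| * (if p = 0 then (1:ℝ) else 1 / (p:ℝ)^2) := by ring
      _ ≤ _ := le_add_of_nonneg_right hterm2
  · -- near case: |p| > |j|/2, use 1/p^4 decay
    push_neg at hc
    have hp0 : p ≠ 0 := by
      intro h; subst h
      have h0 : |((0:ℤ):ℝ) - (j:ℝ)| = |(j:ℝ)| := by norm_num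
      rw [h0] at hc; linarith
    have hpne : (p:ℝ) ≠ 0 := by exact_mod_cast hp0
    have hppos : (0:ℝ) < |(p:ℝ)| := abs_pos.mpr hpne
    have hp2 : (0:ℝ) < (p:ℝ)^2 := by
      have := sq_abs (p:ℝ); nlinarith
    have hp4 : (0:ℝ) < (p:ℝ)^4 := by nlinarith
    have hj2 : (0:ℝ) < (j:ℝ)^2 := by
      have := sq_abs (j:ℝ); nlinarith
    have hpbig : |(j:ℝ)| ≤ 2 * |(p:ℝ)| := by
      have hnn := abs_nonneg ((p:ℝ) - (j:ℝ))
      linarith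
    have hpsq : (j:ℝ)^2 ≤ 4 * (p:ℝ)^2 := by
      nlinarith [sq_abs (j:ℝ), sq_abs (p:ℝ), abs_nonneg (j:ℝ)]
    have hfst : (if p = 0 then (1 : ℝ) else min 1 (1 / (p : ℝ) ^ 4)) ≤ 1 / (p:ℝ)^4 := by
      rw [if_neg hp0]; exact min_le_right _ _
    have hsec : (if p = j then (4 : ℝ) else min 4 (2 / |(p : ℝ) - (j : ℝ)|)) ≤ 4 := by
      split
      · exact le_rfl
      · exact min_le_left _ _
    have hkey : 1 / (p:ℝ)^4 * 4 ≤ 16 / (j:ℝ)^2 * (1 / (p:ℝ)^2) := by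
      rw [div_mul_eq_mul_div, div_mul_div_comm, div_le_div_iff₀ hp4 (by positivity)]
      nlinarith
    have hterm1 : (0:ℝ) ≤ 4 / |(j:ℝ)| * (if p = 0 then (1:ℝ) else 1 / (p:ℝ)^2) := by
      have hbnn : (0:ℝ) ≤ (if p = 0 then (1:ℝ) else 1 / (p:ℝ)^2) := by
        split
        · norm_num
        · positivity
      positivity
    calc (if p = 0 then (1 : ℝ) else min 1 (1 / (p : ℝ) ^ 4)) *
          (if p = j then (4 : ℝ) else min 4 (2 / |(p : ℝ) - (j : ℝ)|))
        ≤ 1 / (p:ℝ)^4 * 4 := mul_le_mul hfst hsec hsnn (by positivity)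
      _ ≤ 16 / (j:ℝ)^2 * (1 / (p:ℝ)^2) := hkey
      _ = 16 / (j:ℝ)^2 * (if p = 0 then (0:ℝ) else 1 / (p:ℝ)^2) := by rw [if_neg hp0]
      _ ≤ _ := le_add_of_nonneg_left hterm1

theorem stmt_8 :
    ∃ c : ℝ, 0 < c ∧ ∀ (N : ℕ), 1 ≤ N → ∀ j : ℤ, j ≠ 0 → |j| ≤ (N : ℤ) →
      ∑ p ∈ Finset.Icc (-(N : ℤ)) (N : ℤ),
          (if p = 0 then (1 : ℝ) else min 1 (1 / (p : ℝ) ^ 4)) *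
            (if p = j then (4 : ℝ) else min 4 (2 / |(p : ℝ) - (j : ℝ)|))
        ≤ c / |(j : ℝ)| := by
  refine ⟨84, by norm_num, ?_⟩
  intro N _ j hj _
  have hj1 : (1:ℝ) ≤ |(j:ℝ)| := by
    rw [← Int.cast_abs]; exact_mod_cast Int.one_le_abs hj
  have hjpos : (0:ℝ) < |(j:ℝ)| := lt_of_lt_of_le one_pos hj1
  have hj2 : (0:ℝ) < (j:ℝ)^2 := by
    have hjne : (j:ℝ) ≠ 0 := by exact_mod_cast hj
    positivity
  calc ∑ p ∈ Finset.Icc (-(N : ℤ)) (N : ℤ),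
          (if p = 0 then (1 : ℝ) else min 1 (1 / (p : ℝ) ^ 4)) *
            (if p = j then (4 : ℝ) else min 4 (2 / |(p : ℝ) - (j : ℝ)|))
      ≤ ∑ p ∈ Finset.Icc (-(N : ℤ)) (N : ℤ),
          (4 / |(j:ℝ)| * (if p = 0 then (1:ℝ) else 1 / (p:ℝ)^2)
            + 16 / (j:ℝ)^2 * (if p = 0 then (0:ℝ) else 1 / (p:ℝ)^2)) :=
        Finset.sum_le_sum fun p _ => pointwise j p hj
    _ = 4 / |(j:ℝ)| * (∑ p ∈ Finset.Icc (-(N : ℤ)) (N : ℤ), (if p = 0 then (1:ℝ) else 1 / (p:ℝ)^2))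
        + 16 / (j:ℝ)^2 * (∑ p ∈ Finset.Icc (-(N : ℤ)) (N : ℤ), (if p = 0 then (0:ℝ) else 1 / (p:ℝ)^2)) := by
        rw [Finset.sum_add_distrib, Finset.mul_sum, Finset.mul_sum]
    _ ≤ 4 / |(j:ℝ)| * 5 + 16 / (j:ℝ)^2 * 4 := by
        have hg' := sum_g'_le N
        have hg := sum_g_le N
        have hgle : ∑ p ∈ Finset.Icc (-(N : ℤ)) (N : ℤ),
            (if p = 0 then (0:ℝ) else 1 / (p:ℝ)^2) ≤ 4 := by
          have : (0:ℝ) ≤ 4 / ((N:ℝ) + 1) := by positivity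
          linarith
        gcongr
    _ ≤ 84 / |(j:ℝ)| := by
        have hsq : (j:ℝ)^2 = |(j:ℝ)|^2 := (sq_abs _).symm
        rw [hsq]
        have h64 : 16 / |(j:ℝ)|^2 * 4 ≤ 64 / |(j:ℝ)| := by
          rw [div_mul_eq_mul_div, div_le_div_iff₀ (by positivity) hjpos]
          nlinarith
        have h20 : 4 / |(j:ℝ)| * 5 = 20 / |(j:ℝ)| := by ring
        have h84 : 20 / |(j:ℝ)| + 64 / |(j:ℝ)| = 84 / |(j:ℝ)| := by ring
        linarith
end

section
/- (Dual certificate implies ℓ₁ uniqueness.) Let R be an L×M complex matrix, s ∈ ℂ^M with support T ⊆ {1,...,M}, and y = Rs. Suppose the columns of R indexed by T are linearly independent, and there exists a vector v in the row space of R (i.e., v = Rᴴq for some q ∈ ℂ^L) such that v_j = sign(s_j) for all j ∈ T and |v_j| < 1 for all j ∉ T, where sign(z) = z/|z| for z ≠ 0. Then s is the unique solution of: minimize ‖s̃‖₁ subject to Rs̃ = y. -/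
theorem stmt_11 (L M : ℕ) (R : Matrix (Fin L) (Fin M) ℂ) (s : Fin M → ℂ)
    (hli : LinearIndependent ℂ (fun j : {j : Fin M // s j ≠ 0} => fun i => R i j.1))
    (q : Fin L → ℂ)
    (hsign : ∀ j, s j ≠ 0 → (R.conjTranspose.mulVec q) j = s j / (‖s j‖ : ℂ))
    (hbound : ∀ j, s j = 0 → ‖(R.conjTranspose.mulVec q) j‖ < 1) :
    ∀ s' : Fin M → ℂ, R.mulVec s' = R.mulVec s → s' ≠ s →
      ∑ j, ‖s j‖ < ∑ j, ‖s' j‖ := by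
  intro s' hR hne
  set v : Fin M → ℂ := R.conjTranspose.mulVec q with hv
  have hRh : ∀ i, ∑ j, R i j * (s' j - s j) = 0 := by
    intro i
    have h1 : R.mulVec (s' - s) = 0 := by
      rw [Matrix.mulVec_sub, hR, sub_self]
    have := congrFun h1 i
    simpa [Matrix.mulVec, dotProduct, mul_sub] using this
  have hconjv : ∀ j, (starRingEnd ℂ) (v j) = ∑ i, R i j * (starRingEnd ℂ) (q i) := by
    intro j
    simp [hv, Matrix.mulVec, dotProduct, Matrix.conjTranspose_apply, map_sum, mul_comm]
  have hzero : ∑ j, (starRingEnd ℂ) (v j) * (s' j - s j) = 0 := by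
    calc ∑ j, (starRingEnd ℂ) (v j) * (s' j - s j)
        = ∑ j, ∑ i, R i j * (starRingEnd ℂ) (q i) * (s' j - s j) := by
          refine Finset.sum_congr rfl fun j _ => ?_
          rw [hconjv j, Finset.sum_mul]
      _ = ∑ i, ∑ j, R i j * (starRingEnd ℂ) (q i) * (s' j - s j) := Finset.sum_comm
      _ = ∑ i, (starRingEnd ℂ) (q i) * ∑ j, R i j * (s' j - s j) := by
          refine Finset.sum_congr rfl fun i _ => ?_
          rw [Finset.mul_sum]
          exact Finset.sum_congr rfl fun j _ => by ring
      _ = 0 := by simp [hRh]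
  have key : ∀ j, ‖s j‖ + ((starRingEnd ℂ) (v j) * (s' j - s j)).re ≤ ‖s' j‖ := by
    intro j
    by_cases hj : s j = 0
    · have hb := hbound j hj
      have h1 : ((starRingEnd ℂ) (v j) * (s' j - s j)).re ≤ ‖v j‖ * ‖s' j‖ := by
        calc ((starRingEnd ℂ) (v j) * (s' j - s j)).re
            ≤ ‖(starRingEnd ℂ) (v j) * (s' j - s j)‖ := Complex.re_le_norm _
          _ = ‖v j‖ * ‖s' j - s j‖ := by rw [norm_mul, RCLike.norm_conj]
          _ = ‖v j‖ * ‖s' j‖ := by rw [hj, sub_zero]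
      have h2 : ‖v j‖ * ‖s' j‖ ≤ ‖s' j‖ := by
        nlinarith [norm_nonneg (s' j)]
      simp only [hj, norm_zero, zero_add, sub_zero] at h1 ⊢
      linarith
    · have hvj := hsign j hj
      have hr : (‖s j‖ : ℂ) ≠ 0 := by
        simpa [Complex.ofReal_ne_zero] using (norm_ne_zero_iff.mpr hj)
      have hnorm : ‖v j‖ = 1 := by
        rw [hvj, norm_div, Complex.norm_real, Real.norm_of_nonneg (norm_nonneg _),
          div_self (norm_ne_zero_iff.mpr hj)]
      have hcs : (starRingEnd ℂ) (v j) * s j = (‖s j‖ : ℂ) := by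
        rw [hvj, map_div₀, Complex.conj_ofReal, div_mul_eq_mul_div]
        rw [mul_comm, Complex.mul_conj, Complex.normSq_eq_norm_sq, sq]
        push_cast
        field_simp
      have hsplit : (starRingEnd ℂ) (v j) * (s' j - s j)
          = (starRingEnd ℂ) (v j) * s' j - (‖s j‖ : ℂ) := by
        rw [mul_sub, hcs]
      have h1 : ((starRingEnd ℂ) (v j) * s' j).re ≤ ‖s' j‖ := by
        calc ((starRingEnd ℂ) (v j) * s' j).re ≤ ‖(starRingEnd ℂ) (v j) * s' j‖ :=
            Complex.re_le_norm _
          _ = ‖v j‖ * ‖s' j‖ := by rw [norm_mul, RCLike.norm_conj]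
          _ = ‖s' j‖ := by rw [hnorm, one_mul]
      rw [hsplit]
      simp only [Complex.sub_re, Complex.ofReal_re]
      linarith
  -- main split
  by_cases hcase : ∃ j, s j = 0 ∧ s' j ≠ 0
  · obtain ⟨j₀, hj₀, hj₀'⟩ := hcase
    have hlt : ‖s j₀‖ + ((starRingEnd ℂ) (v j₀) * (s' j₀ - s j₀)).re < ‖s' j₀‖ := by
      have hb := hbound j₀ hj₀
      have h1 : ((starRingEnd ℂ) (v j₀) * (s' j₀ - s j₀)).re ≤ ‖v j₀‖ * ‖s' j₀‖ := by
        calc ((starRingEnd ℂ) (v j₀) * (s' j₀ - s j₀)).re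
            ≤ ‖(starRingEnd ℂ) (v j₀) * (s' j₀ - s j₀)‖ := Complex.re_le_norm _
          _ = ‖v j₀‖ * ‖s' j₀ - s j₀‖ := by rw [norm_mul, RCLike.norm_conj]
          _ = ‖v j₀‖ * ‖s' j₀‖ := by rw [hj₀, sub_zero]
      have hp : 0 < ‖s' j₀‖ := norm_pos_iff.mpr hj₀'
      have h2 : ‖v j₀‖ * ‖s' j₀‖ < ‖s' j₀‖ := by nlinarith
      simp only [hj₀, norm_zero, zero_add, sub_zero] at h1 ⊢
      linarith
    have hsum : ∑ j, (‖s j‖ + ((starRingEnd ℂ) (v j) * (s' j - s j)).re) < ∑ j, ‖s' j‖ :=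
      Finset.sum_lt_sum (fun j _ => key j) ⟨j₀, Finset.mem_univ _, hlt⟩
    have hre : ∑ j, ((starRingEnd ℂ) (v j) * (s' j - s j)).re = 0 := by
      rw [← Complex.re_sum, hzero, Complex.zero_re]
    rw [Finset.sum_add_distrib, hre, add_zero] at hsum
    exact hsum
  · exfalso
    push_neg at hcase
    have hsupp : ∀ j, s j = 0 → s' j - s j = 0 := fun j hj => by
      rw [hcase j hj, hj, sub_zero]
    have hg : ∀ j : {j : Fin M // s j ≠ 0}, s' j.1 - s j.1 = 0 := by
      have := (Fintype.linearIndependent_iff.mp hli)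
        (fun j => s' j.1 - s j.1)
      apply this
      funext i
      simp only [Finset.sum_apply, Pi.smul_apply, smul_eq_mul, Pi.zero_apply]
      rw [← Finset.sum_subtype (Finset.univ.filter (fun j => s j ≠ 0)) (by simp)
        (fun j => (s' j - s j) * R i j)]
      rw [Finset.sum_filter_of_ne (fun j _ h => by
        by_contra hc
        exact h (by rw [hsupp j hc, zero_mul]))]
      rw [← hRh i]
      exact Finset.sum_congr rfl fun j _ => mul_comm _ _
    have : s' = s := by
      funext j
      by_cases hj : s j = 0
      · rw [hcase j hj, hj]
      · have := hg ⟨j, hj⟩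
        simpa [sub_eq_zero] using this
    exact hne this
end
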